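/- Let P and Q be probability measures on ℝ^n with finite second moments, set μ_P := ∫ ξ dP, μ_Q := ∫ ξ dQ, Σ_P := ∫ ξξᵀ dP, Σ_Q := ∫ ξξᵀ dQ, and for γ ∈ [0,1] let P_γ := (1−γ)·P + γ·Q. For x ∈ ℝ^n define D_x(P,Q) := xᵀ(Σ_Q − Σ_P)x − 2·(xᵀμ_P)·(xᵀ(μ_Q − μ_P)). Suppose ‖μ_Q − μ_P‖₂ ≤ B_μ and x lies in the unit simplex Δ_n (x_i ≥ 0 for all i and Σ_i x_i = 1). Then D_x(P,P_γ) + D_x(P_γ,P) = 2·γ²·(xᵀ(μ_Q − μ_P))² ≤ 2·γ²·B_μ². -/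

import Mathlib

open MeasureTheory Filter Set
open scoped BigOperators

/-- The mixture `(1-γ)·P + γ·Q` of two measures. -/
noncomputable def mix {n : ℕ} (P Q : Measure (EuclideanSpace ℝ (Fin n))) (γ : ℝ) :
    Measure (EuclideanSpace ℝ (Fin n)) :=
  ENNReal.ofReal (1 - γ) • P + ENNReal.ofReal γ • Q

/-- The mean `μ_P = ∫ ξ dP`. -/
noncomputable def meanVec {n : ℕ} (P : Measure (EuclideanSpace ℝ (Fin n))) :
    EuclideanSpace ℝ (Fin n) :=
  ∫ ξ, ξ ∂P

/-- The second-moment matrix `Σ_P = ∫ ξξᵀ dP` (entrywise). -/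
noncomputable def secondMoment {n : ℕ} (P : Measure (EuclideanSpace ℝ (Fin n))) :
    Matrix (Fin n) (Fin n) ℝ :=
  Matrix.of fun i j => ∫ ξ, ξ i * ξ j ∂P

/-- The quadratic form `xᵀ A x`. -/
noncomputable def quadForm {n : ℕ} (A : Matrix (Fin n) (Fin n) ℝ)
    (x : EuclideanSpace ℝ (Fin n)) : ℝ :=
  ∑ i, ∑ j, x i * A i j * x j

/-- The G-derivative `D_x(P,Q) = xᵀ(Σ_Q − Σ_P)x − 2(xᵀμ_P)(xᵀ(μ_Q − μ_P))` of the
variance `V_x(P) = xᵀ(Σ_P − μ_Pμ_Pᵀ)x` at `P` in direction `Q`. -/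
noncomputable def varDeriv {n : ℕ} (x : EuclideanSpace ℝ (Fin n))
    (P Q : Measure (EuclideanSpace ℝ (Fin n))) : ℝ :=
  quadForm (secondMoment Q - secondMoment P) x -
    2 * (inner ℝ x (meanVec P) : ℝ) * (inner ℝ x (meanVec Q - meanVec P) : ℝ)

lemma quad_cancel {n : ℕ} (A B : Matrix (Fin n) (Fin n) ℝ) (x : EuclideanSpace ℝ (Fin n)) :
    quadForm (A - B) x + quadForm (B - A) x = 0 := by
  simp [quadForm, Matrix.sub_apply, mul_sub, sub_mul, ← Finset.sum_add_distrib]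

lemma integrable_id_of_sq {n : ℕ} (P : Measure (EuclideanSpace ℝ (Fin n)))
    [IsProbabilityMeasure P] (hP : Integrable (fun ξ => ‖ξ‖ ^ 2) P) :
    Integrable (fun ξ : EuclideanSpace ℝ (Fin n) => ξ) P := by
  refine ((integrable_const (1:ℝ)).add hP).mono (aestronglyMeasurable_id) ?_
  filter_upwards with ξ
  have h : ‖ξ‖ ≤ 1 + ‖ξ‖ ^ 2 := by nlinarith [norm_nonneg ξ, sq_nonneg (‖ξ‖-1)]
  calc ‖ξ‖ ≤ 1 + ‖ξ‖^2 := h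
    _ ≤ ‖1 + ‖ξ‖^2‖ := le_abs_self _

lemma meanVec_mix {n : ℕ} (P Q : Measure (EuclideanSpace ℝ (Fin n)))
    [IsProbabilityMeasure P] [IsProbabilityMeasure Q]
    (hP : Integrable (fun ξ : EuclideanSpace ℝ (Fin n) => ξ) P)
    (hQ : Integrable (fun ξ : EuclideanSpace ℝ (Fin n) => ξ) Q)
    (γ : ℝ) (hγ : γ ∈ Set.Icc (0:ℝ) 1) :
    meanVec (mix P Q γ) = meanVec P + γ • (meanVec Q - meanVec P) := by
  obtain ⟨h0, h1⟩ := hγ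
  have hP' : Integrable (fun ξ : EuclideanSpace ℝ (Fin n) => ξ)
      (ENNReal.ofReal (1 - γ) • P) := hP.smul_measure ENNReal.ofReal_ne_top
  have hQ' : Integrable (fun ξ : EuclideanSpace ℝ (Fin n) => ξ)
      (ENNReal.ofReal γ • Q) := hQ.smul_measure ENNReal.ofReal_ne_top
  rw [meanVec, mix, integral_add_measure hP' hQ', integral_smul_measure,
    integral_smul_measure, ENNReal.toReal_ofReal (by linarith), ENNReal.toReal_ofReal h0]
  rw [meanVec, meanVec]
  module

lemma norm_le_one_of_simplex {n : ℕ} (x : EuclideanSpace ℝ (Fin n))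
    (hx_nonneg : ∀ i, 0 ≤ x i) (hx_sum : ∑ i, x i = 1) : ‖x‖ ≤ 1 := by
  have h : ‖x‖ ^ 2 = ∑ i, x i ^ 2 := by
    rw [← real_inner_self_eq_norm_sq]
    simp only [PiLp.inner_apply, RCLike.inner_apply, conj_trivial, sq]
  have h2 : ∑ i, x i ^ 2 ≤ (∑ i, x i) ^ 2 :=
    Finset.sum_sq_le_sq_sum_of_nonneg (fun i _ => hx_nonneg i)
  nlinarith [norm_nonneg x]

/-- Lemma 6.2(i) (smoothness of the variance risk measure): for `x` in the unit simplex
and `‖μ_Q − μ_P‖₂ ≤ B_μ`,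
`D_x(P,P_γ) + D_x(P_γ,P) = 2γ²(xᵀ(μ_Q − μ_P))² ≤ 2γ²B_μ²`. -/
theorem variance_G_smoothness {n : ℕ}
    (P Q : Measure (EuclideanSpace ℝ (Fin n)))
    [IsProbabilityMeasure P] [IsProbabilityMeasure Q]
    (hP : Integrable (fun ξ => ‖ξ‖ ^ 2) P) (hQ : Integrable (fun ξ => ‖ξ‖ ^ 2) Q)
    (Bμ : ℝ) (hBμ : ‖meanVec Q - meanVec P‖ ≤ Bμ)
    (x : EuclideanSpace ℝ (Fin n)) (hx_nonneg : ∀ i, 0 ≤ x i)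
    (hx_sum : ∑ i, x i = 1)
    (γ : ℝ) (hγ : γ ∈ Set.Icc (0 : ℝ) 1) :
    varDeriv x P (mix P Q γ) + varDeriv x (mix P Q γ) P =
      2 * γ ^ 2 * (inner ℝ x (meanVec Q - meanVec P) : ℝ) ^ 2 ∧
    2 * γ ^ 2 * (inner ℝ x (meanVec Q - meanVec P) : ℝ) ^ 2 ≤ 2 * γ ^ 2 * Bμ ^ 2 := by
  
  have hmix : meanVec (mix P Q γ) = meanVec P + γ • (meanVec Q - meanVec P) :=
    meanVec_mix P Q (integrable_id_of_sq P hP) (integrable_id_of_sq Q hQ) γ hγ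
  constructor
  · have hq := quad_cancel (secondMoment (mix P Q γ)) (secondMoment P) x
    have h1 : (inner ℝ x (meanVec (mix P Q γ) - meanVec P) : ℝ)
        = γ * (inner ℝ x (meanVec Q - meanVec P) : ℝ) := by
      rw [hmix]; simp [inner_smul_right]
    have h2 : (inner ℝ x (meanVec P - meanVec (mix P Q γ)) : ℝ)
        = -(γ * (inner ℝ x (meanVec Q - meanVec P) : ℝ)) := by
      rw [← h1, ← inner_neg_right]; congr 1; abel
    have h3 : (inner ℝ x (meanVec (mix P Q γ)) : ℝ)
        = (inner ℝ x (meanVec P) : ℝ) + γ * (inner ℝ x (meanVec Q - meanVec P) : ℝ) := by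
      rw [hmix, inner_add_right, inner_smul_right]
    simp only [varDeriv, h1, h2, h3]
    ring_nf
    ring_nf at hq
    linarith
  · have hB0 : 0 ≤ Bμ := le_trans (norm_nonneg _) hBμ
    have hx1 : ‖x‖ ≤ 1 := norm_le_one_of_simplex x hx_nonneg hx_sum
    have hc : |(inner ℝ x (meanVec Q - meanVec P) : ℝ)| ≤ Bμ := by
      calc |(inner ℝ x (meanVec Q - meanVec P) : ℝ)| ≤ ‖x‖ * ‖meanVec Q - meanVec P‖ :=
            abs_real_inner_le_norm _ _
        _ ≤ 1 * Bμ := mul_le_mul hx1 hBμ (norm_nonneg _) zero_le_one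
        _ = Bμ := one_mul _
    have : (inner ℝ x (meanVec Q - meanVec P) : ℝ) ^ 2 ≤ Bμ ^ 2 := sq_le_sq' (by linarith [abs_le.mp hc]) (abs_le.mp hc).2
    nlinarith [sq_nonneg γ]
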